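/- Let m ∈ ℕ and let p ∈ P_m. If the evaluation of p vanishes at every point of the Korányi unit sphere S_ρ = {(x,y,t) ∈ ℝ³ : (x²+y²)² + t² = 1}, then p = 0. Consequently, the ℝ-linear restriction map from H_m to the space of real-valued functions on S_ρ is injective, and its image H_m(S_ρ) is a finite-dimensional space of dimension m + 1. -/

import Mathlib

open MvPolynomial

noncomputable section

/-- The polynomial ring ℝ[x,y,t], with x = X 0, y = X 1, t = X 2. -/
abbrev R3 := MvPolynomial (Fin 3) ℝ

/-- The weights w(x) = w(y) = 1, w(t) = 2. -/
def w3 : Fin 3 → ℤ := ![1, 1, 2]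

/-- The horizontal vector field X p = ∂ₓ p + 2 y ∂ₜ p. -/
def Xop : R3 →ₗ[ℝ] R3 :=
  (pderiv (0 : Fin 3)).toLinearMap +
    (LinearMap.mulLeft ℝ ((2 : R3) * X 1)) ∘ₗ (pderiv (2 : Fin 3)).toLinearMap

/-- The horizontal vector field Y p = ∂_y p − 2 x ∂ₜ p. -/
def Yop : R3 →ₗ[ℝ] R3 :=
  (pderiv (1 : Fin 3)).toLinearMap -
    (LinearMap.mulLeft ℝ ((2 : R3) * X 0)) ∘ₗ (pderiv (2 : Fin 3)).toLinearMap

/-- The Heisenberg sub-Laplacian Δ_H = X² + Y². -/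
def ΔH : R3 →ₗ[ℝ] R3 := Xop ∘ₗ Xop + Yop ∘ₗ Yop

/-- P_m : weighted homogeneous polynomials of degree m (ℤ-indexed, so P_m = 0 for m < 0). -/
def Pm (m : ℤ) : Submodule ℝ R3 := weightedHomogeneousSubmodule ℝ w3 m

/-- H_m : weighted homogeneous Δ_H-harmonic polynomials of degree m. -/
def Hm (m : ℤ) : Submodule ℝ R3 := Pm m ⊓ LinearMap.ker ΔH

/-- The polynomial gauge η₊² = x² + y² + 4t. -/
def etaSq : R3 := X 0 ^ 2 + X 1 ^ 2 + 4 * X 2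
/-- The Korányi unit sphere in ℝ³. -/
def Sρ : Set (Fin 3 → ℝ) := {v | (v 0 ^ 2 + v 1 ^ 2) ^ 2 + v 2 ^ 2 = 1}

/-- Restriction of harmonic polynomials to the Korányi unit sphere, as a linear map
into real-valued functions on `Sρ`. -/
def resMap (m : ℤ) : Hm m →ₗ[ℝ] (Sρ → ℝ) where
  toFun p := fun v => eval (v : Fin 3 → ℝ) (p : R3)
  map_add' p q := by funext v; simp
  map_smul' c p := by funext v; simp [MvPolynomial.smul_eval]


-- ===== auxiliary lemmas =====

lemma w3_nonneg (i : Fin 3) : 0 ≤ w3 i := by fin_cases i <;> simp [w3]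

lemma wdeg_eq (d : Fin 3 →₀ ℕ) :
    Finsupp.weight w3 d = ((d 0 + d 1 + 2 * d 2 : ℕ) : ℤ) := by
  rw [Finsupp.weight_apply, Finsupp.sum_fintype _ _ (by simp)]
  simp [Fin.sum_univ_three, w3]
  ring

lemma wh_pderiv {p : R3} {n : ℤ} (i : Fin 3) (hp : IsWeightedHomogeneous w3 p n) :
    IsWeightedHomogeneous w3 (pderiv i p) (n - w3 i) := by
  rw [p.as_sum, map_sum]
  apply IsWeightedHomogeneous.sum
  intro d hd
  rw [pderiv_monomial]
  by_cases h : d i = 0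
  · simp [h]
    exact isWeightedHomogeneous_zero _ _ _
  · apply isWeightedHomogeneous_monomial
    have hs : (d - Finsupp.single i 1) + Finsupp.single i 1 = d := by
      ext j
      by_cases hj : j = i
      · subst hj; simp [Nat.sub_add_cancel (Nat.one_le_iff_ne_zero.2 h)]
      · simp [Finsupp.single_apply, Ne.symm hj, hj]
    have hw : Finsupp.weight w3 d = n := hp (mem_support_iff.1 hd)
    have := congrArg (Finsupp.weight w3) hs
    rw [map_add] at this
    have hsing : Finsupp.weight w3 (Finsupp.single i 1) = w3 i := by
      rw [Finsupp.weight_apply, Finsupp.sum_single_index]; simp; simp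
    omega

lemma X_mem (i : Fin 3) : (X i : R3) ∈ Pm (w3 i) := isWeightedHomogeneous_X ℝ w3 i

lemma mul_mem_Pm {p q : R3} {a b : ℤ} (hp : p ∈ Pm a) (hq : q ∈ Pm b) : p * q ∈ Pm (a + b) :=
  IsWeightedHomogeneous.mul hp hq

lemma pderiv_mem_Pm {p : R3} {n : ℤ} (i : Fin 3) (hp : p ∈ Pm n) :
    pderiv i p ∈ Pm (n - w3 i) := wh_pderiv i hp

lemma two_mul_X_mem (i : Fin 3) : ((2 : R3) * X i) ∈ Pm (w3 i) := by
  have : ((2:R3) * X i) = (2:ℝ) • (X i : R3) := by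
    rw [smul_eq_C_mul, map_ofNat]
  rw [this]
  exact Submodule.smul_mem _ _ (X_mem i)

lemma Xop_mem {p : R3} {n : ℤ} (hp : p ∈ Pm n) : Xop p ∈ Pm (n - 1) := by
  have h1 : pderiv (0 : Fin 3) p ∈ Pm (n - 1) := by
    have := pderiv_mem_Pm 0 hp; simpa [w3] using this
  have h2 : (2 : R3) * X 1 * pderiv (2 : Fin 3) p ∈ Pm (n - 1) := by
    have := mul_mem_Pm (two_mul_X_mem 1) (pderiv_mem_Pm 2 hp)
    have e : w3 1 + (n - w3 2) = n - 1 := by simp [w3]; ring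
    rwa [e] at this
  rw [mul_assoc] at h2
  simpa [Xop] using Submodule.add_mem _ h1 h2

lemma Yop_mem {p : R3} {n : ℤ} (hp : p ∈ Pm n) : Yop p ∈ Pm (n - 1) := by
  have h1 : pderiv (1 : Fin 3) p ∈ Pm (n - 1) := by
    have := pderiv_mem_Pm 1 hp; simpa [w3] using this
  have h2 : (2 : R3) * X 0 * pderiv (2 : Fin 3) p ∈ Pm (n - 1) := by
    have := mul_mem_Pm (two_mul_X_mem 0) (pderiv_mem_Pm 2 hp)
    have e : w3 0 + (n - w3 2) = n - 1 := by simp [w3]; ring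
    rwa [e] at this
  rw [mul_assoc] at h2
  simpa [Yop] using Submodule.sub_mem _ h1 h2

lemma ΔH_mem {p : R3} {n : ℤ} (hp : p ∈ Pm n) : ΔH p ∈ Pm (n - 2) := by
  have hx := Xop_mem (Xop_mem hp)
  have hy := Yop_mem (Yop_mem hp)
  have e : n - 1 - 1 = n - 2 := by ring
  rw [e] at hx hy
  simpa [ΔH] using Submodule.add_mem _ hx hy

lemma pderiv_comm (i j : Fin 3) (p : R3) :
    pderiv i (pderiv j p) = pderiv j (pderiv i p) := by
  rw [p.as_sum]
  simp only [map_sum]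
  apply Finset.sum_congr rfl
  intro d _
  simp only [pderiv_monomial]
  rcases eq_or_ne i j with rfl | h
  · rfl
  · have h1 : ((d - Finsupp.single j 1 : Fin 3 →₀ ℕ)) i = d i := by
      simp [Finsupp.tsub_apply, Finsupp.single_apply, Ne.symm h]
    have h2 : ((d - Finsupp.single i 1 : Fin 3 →₀ ℕ)) j = d j := by
      simp [Finsupp.tsub_apply, Finsupp.single_apply, h]
    rw [h1, h2, tsub_tsub, tsub_tsub, add_comm]
    ring_nf

lemma pderiv_two (i : Fin 3) : pderiv i (2 : R3) = 0 := by
  rw [show (2:R3) = C (2:ℝ) from (map_ofNat C 2).symm, pderiv_C]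

lemma pderiv_natCast (i : Fin 3) (n : ℕ) : pderiv i ((n : R3)) = 0 := by
  rw [show ((n:R3)) = C ((n:ℝ)) from (map_natCast C n).symm, pderiv_C]

lemma ΔH_eq (p : R3) : ΔH p =
    pderiv 0 (pderiv 0 p) + pderiv 1 (pderiv 1 p)
    + 4 * X 1 * pderiv 2 (pderiv 0 p) - 4 * X 0 * pderiv 2 (pderiv 1 p)
    + 4 * (X 0 ^ 2 + X 1 ^ 2) * pderiv 2 (pderiv 2 p) := by
  simp only [ΔH, Xop, Yop, LinearMap.add_apply, LinearMap.sub_apply, LinearMap.comp_apply,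
    LinearMap.mulLeft_apply, Derivation.coeFn_coe, LinearMap.coe_comp, Function.comp_apply]
  simp only [map_add, map_sub, pderiv_mul, pderiv_two, map_mul, pderiv_X_self,
    pderiv_X_of_ne (by decide : (1:Fin 3) ≠ 0),
    pderiv_X_of_ne (by decide : (0:Fin 3) ≠ 1), pderiv_X_of_ne (by decide : (1:Fin 3) ≠ 2),
    pderiv_X_of_ne (by decide : (0:Fin 3) ≠ 2), pderiv_C]
  rw [pderiv_comm 0 2 p, pderiv_comm 1 2 p]
  ring

set_option maxHeartbeats 2000000 in
lemma ΔH_mono (a b c : ℕ) :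
    ΔH (X 0^(a+2) * X 1^b * X 2^c : R3) =
      (((a+2)*(a+1) : ℕ) : ℝ) • (X 0^a * X 1^b * X 2^c : R3)
      + ((b*(b-1) : ℕ) : ℝ) • (X 0^(a+2) * X 1^(b-2) * X 2^c)
      + ((4*c*(a+2) : ℕ) : ℝ) • (X 0^(a+1) * X 1^(b+1) * X 2^(c-1))
      + ((4*c*(c-1) : ℕ) : ℝ) • (X 0^(a+4) * X 1^b * X 2^(c-2))
      + ((4*c*(c-1) : ℕ) : ℝ) • (X 0^(a+2) * X 1^(b+2) * X 2^(c-2))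
      - ((4*c*b : ℕ) : ℝ) • (X 0^(a+3) * X 1^(b-1) * X 2^(c-1)) := by
  have d01 : (0:Fin 3) ≠ 1 := by decide
  have d02 : (0:Fin 3) ≠ 2 := by decide
  have d10 : (1:Fin 3) ≠ 0 := by decide
  have d12 : (1:Fin 3) ≠ 2 := by decide
  have d20 : (2:Fin 3) ≠ 0 := by decide
  have d21 : (2:Fin 3) ≠ 1 := by decide
  rcases c with _ | _ | c <;> rcases b with _ | _ | b <;>
  · rw [ΔH_eq]
    simp only [pderiv_pow, pderiv_X_self, pderiv_X_of_ne d01, pderiv_X_of_ne d02,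
      pderiv_X_of_ne d10, pderiv_X_of_ne d12, pderiv_X_of_ne d20, pderiv_X_of_ne d21,
      map_mul, map_add, pderiv_mul, pderiv_two, map_natCast, smul_eq_C_mul,
      Nat.add_sub_cancel, Nat.succ_sub_one, pow_zero, Nat.zero_sub, Nat.sub_self]
    push_cast
    simp only [map_add, pderiv_natCast, pderiv_two, pderiv_one, map_zero, pderiv_C]
    ring

lemma X_pow_mem (i : Fin 3) (n : ℕ) : (X i : R3)^n ∈ Pm (n * w3 i) := by
  induction n with
  | zero => simpa using (show (1:R3) ∈ Pm 0 from isWeightedHomogeneous_one ℝ w3)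
  | succ n ih =>
    have := mul_mem_Pm ih (X_mem i)
    rw [← pow_succ] at this
    convert this using 2
    push_cast; ring

lemma mono_mem_Pm (a b c : ℕ) : (X 0^a * X 1^b * X 2^c : R3) ∈ Pm (a + b + 2*c) := by
  have := mul_mem_Pm (mul_mem_Pm (X_pow_mem 0 a) (X_pow_mem 1 b)) (X_pow_mem 2 c)
  convert this using 2
  simp [w3]; push_cast; ring


lemma mono_surj (k : ℕ) : ∀ n a b c : ℕ, 3*c+b ≤ n → a+b+2*c = k →
    (X 0^a * X 1^b * X 2^c : R3) ∈ (Pm ((k:ℤ)+2)).map ΔH := by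
  intro n
  induction n using Nat.strong_induction_on with
  | _ n IH =>
  intro a b c hn hdeg
  set M := (Pm ((k:ℤ)+2)).map ΔH with hM
  have hq : (X 0^(a+2) * X 1^b * X 2^c : R3) ∈ Pm ((k:ℤ)+2) := by
    have := mono_mem_Pm (a+2) b c
    have e : (((a+2) : ℕ) : ℤ) + b + 2*c = (k:ℤ)+2 := by push_cast; omega
    rwa [e] at this
  have hΔ : ΔH (X 0^(a+2) * X 1^b * X 2^c : R3) ∈ M := ⟨_, hq, rfl⟩
  rw [ΔH_mono] at hΔ
  -- memberships of the five side terms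
  have hT1 : ((b*(b-1) : ℕ) : ℝ) • (X 0^(a+2) * X 1^(b-2) * X 2^c : R3) ∈ M := by
    rcases Nat.lt_or_ge b 2 with hb | hb
    · have : b*(b-1) = 0 := by interval_cases b <;> rfl
      rw [this]; simp
    · exact Submodule.smul_mem _ _ (IH (3*c+b-2) (by omega) (a+2) (b-2) c (by omega) (by omega))
  have hT2 : ((4*c*(a+2) : ℕ) : ℝ) • (X 0^(a+1) * X 1^(b+1) * X 2^(c-1) : R3) ∈ M := by
    rcases Nat.eq_zero_or_pos c with hc | hc
    · rw [hc]; simp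
    · exact Submodule.smul_mem _ _ (IH (3*(c-1)+(b+1)) (by omega) (a+1) (b+1) (c-1)
        (by omega) (by omega))
  have hT3 : ((4*c*(c-1) : ℕ) : ℝ) • (X 0^(a+4) * X 1^b * X 2^(c-2) : R3) ∈ M := by
    rcases Nat.lt_or_ge c 2 with hc | hc
    · have : 4*c*(c-1) = 0 := by interval_cases c <;> rfl
      rw [this]; simp
    · exact Submodule.smul_mem _ _ (IH (3*(c-2)+b) (by omega) (a+4) b (c-2) (by omega) (by omega))
  have hT4 : ((4*c*(c-1) : ℕ) : ℝ) • (X 0^(a+2) * X 1^(b+2) * X 2^(c-2) : R3) ∈ M := by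
    rcases Nat.lt_or_ge c 2 with hc | hc
    · have : 4*c*(c-1) = 0 := by interval_cases c <;> rfl
      rw [this]; simp
    · exact Submodule.smul_mem _ _ (IH (3*(c-2)+(b+2)) (by omega) (a+2) (b+2) (c-2)
        (by omega) (by omega))
  have hT5 : ((4*c*b : ℕ) : ℝ) • (X 0^(a+3) * X 1^(b-1) * X 2^(c-1) : R3) ∈ M := by
    rcases Nat.eq_zero_or_pos c with hc | hc
    · rw [hc]; simp
    · rcases Nat.eq_zero_or_pos b with hb | hb
      · rw [hb]; simp
      · exact Submodule.smul_mem _ _ (IH (3*(c-1)+(b-1)) (by omega) (a+3) (b-1) (c-1)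
          (by omega) (by omega))
  have hA : (((a+2)*(a+1) : ℕ) : ℝ) • (X 0^a * X 1^b * X 2^c : R3) ∈ M := by
    have := Submodule.add_mem M (Submodule.sub_mem M hΔ
      (Submodule.add_mem M (Submodule.add_mem M (Submodule.add_mem M hT1 hT2) hT3) hT4)) hT5
    convert this using 1
    abel
  have hne : (((a+2)*(a+1) : ℕ) : ℝ) ≠ 0 := by positivity
  have := Submodule.smul_mem M ((((a+2)*(a+1) : ℕ) : ℝ))⁻¹ hA
  rwa [inv_smul_smul₀ hne] at this


def Sset (n : ℤ) : Set (Fin 3 →₀ ℕ) := {d | Finsupp.weight w3 d = n}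

lemma Sset_bound {n : ℤ} {d : Fin 3 →₀ ℕ} (hd : d ∈ Sset n) (i : Fin 3) :
    d i < n.toNat + 1 := by
  have h : ((d 0 + d 1 + 2 * d 2 : ℕ) : ℤ) = n := by
    rw [← wdeg_eq]; exact hd
  have h0 : (0:ℤ) ≤ n := h ▸ Int.natCast_nonneg _
  have h2 : d 0 + d 1 + 2 * d 2 = n.toNat := by omega
  fin_cases i
  · exact show d 0 < n.toNat + 1 by omega
  · exact show d 1 < n.toNat + 1 by omega
  · exact show d 2 < n.toNat + 1 by omega

instance Sset_finite (n : ℤ) : Finite (Sset n) := by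
  apply Finite.of_injective (fun d : Sset n => (fun i => (⟨d.1 i, Sset_bound d.2 i⟩ : Fin (n.toNat + 1))))
  intro d e h
  ext i
  have := congrFun h i
  simpa using congrArg Fin.val this

lemma Pm_eq_restrict (n : ℤ) : Pm n = restrictSupport ℝ (Sset n) :=
  weightedHomogeneousSubmodule_eq_finsupp_supported ℝ w3 n

instance Pm_findim (n : ℤ) : FiniteDimensional ℝ (Pm n) := by
  rw [Pm_eq_restrict]
  have : Fintype (Sset n) := Fintype.ofFinite _
  exact Module.Finite.of_basis (basisRestrictSupport ℝ (Sset n))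

lemma finrank_Pm (n : ℤ) : Module.finrank ℝ (Pm n) = Nat.card (Sset n) := by
  rw [Pm_eq_restrict]
  have : Fintype (Sset n) := Fintype.ofFinite _
  rw [Module.finrank_eq_card_basis (basisRestrictSupport ℝ (Sset n)), Nat.card_eq_fintype_card]

def SsetEquiv (m : ℕ) : Sset (m : ℤ) ≃ (Sset ((m : ℤ) - 2)) ⊕ (Fin (m+1)) where
  toFun d :=
    if h : d.1 2 = 0 then
      Sum.inr ⟨d.1 0, by have := Sset_bound d.2 0; simpa using this⟩
    else
      Sum.inl ⟨d.1 - Finsupp.single 2 1, by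
        have hd : ((d.1 0 + d.1 1 + 2 * d.1 2 : ℕ) : ℤ) = m := by rw [← wdeg_eq]; exact d.2
        show Finsupp.weight w3 _ = _
        rw [wdeg_eq]
        have e0 : (d.1 - Finsupp.single 2 1 : Fin 3 →₀ ℕ) 0 = d.1 0 := by
          simp [Finsupp.tsub_apply, Finsupp.single_apply]
        have e1 : (d.1 - Finsupp.single 2 1 : Fin 3 →₀ ℕ) 1 = d.1 1 := by
          simp [Finsupp.tsub_apply, Finsupp.single_apply]
        have e2 : (d.1 - Finsupp.single 2 1 : Fin 3 →₀ ℕ) 2 = d.1 2 - 1 := by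
          simp [Finsupp.tsub_apply, Finsupp.single_apply]
        rw [e0, e1, e2]
        have : d.1 2 ≥ 1 := Nat.one_le_iff_ne_zero.2 h
        push_cast
        omega⟩
  invFun x :=
    match x with
    | Sum.inl e => ⟨e.1 + Finsupp.single 2 1, by
        have he : ((e.1 0 + e.1 1 + 2 * e.1 2 : ℕ) : ℤ) = (m:ℤ) - 2 := by rw [← wdeg_eq]; exact e.2
        show Finsupp.weight w3 _ = _
        rw [wdeg_eq]
        simp only [Finsupp.add_apply, Finsupp.single_apply]
        push_cast
        simp
        omega⟩
    | Sum.inr j => ⟨Finsupp.single 0 (j : ℕ) + Finsupp.single 1 (m - (j : ℕ)), by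
        show Finsupp.weight w3 _ = _
        rw [wdeg_eq]
        simp only [Finsupp.add_apply, Finsupp.single_apply]
        have : (j:ℕ) ≤ m := Nat.lt_succ_iff.1 j.2
        norm_num
        omega⟩
  left_inv d := by
    rcases d with ⟨d, hd⟩
    by_cases h : d 2 = 0
    · simp only [h, dif_pos]
      apply Subtype.ext
      have hdm : ((d 0 + d 1 + 2 * d 2 : ℕ) : ℤ) = m := by rw [← wdeg_eq]; exact hd
      have hsum : d 0 + d 1 = m := by omega
      ext i
      fin_cases i <;> simp [Finsupp.add_apply, Finsupp.single_apply] <;> omega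
    · simp only [h, dif_neg, not_false_iff]
      apply Subtype.ext
      show (d - Finsupp.single 2 1) + Finsupp.single 2 1 = d
      apply tsub_add_cancel_of_le
      rw [Finsupp.le_iff]
      intro i hi
      have : i = 2 := by
        simpa [Finsupp.support_single_ne_zero] using hi
      subst this
      simp [Finsupp.single_apply]
      omega
  right_inv x := by
    rcases x with e | j
    · simp only []
      have h2 : (e.1 + Finsupp.single 2 1 : Fin 3 →₀ ℕ) 2 ≠ 0 := by
        simp [Finsupp.add_apply, Finsupp.single_apply]
      rw [dif_neg h2]
      congr 1
      apply Subtype.ext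
      show (e.1 + Finsupp.single 2 1) - Finsupp.single 2 1 = e.1
      exact add_tsub_cancel_right _ _
    · simp only []
      have h2 : (Finsupp.single 0 (j:ℕ) + Finsupp.single 1 (m - (j:ℕ)) : Fin 3 →₀ ℕ) 2 = 0 := by
        simp [Finsupp.add_apply, Finsupp.single_apply]
      rw [dif_pos h2]
      congr 1
      apply Fin.ext
      simp [Finsupp.add_apply, Finsupp.single_apply]

lemma card_Sset (m : ℕ) : Nat.card (Sset (m:ℤ)) = Nat.card (Sset ((m:ℤ) - 2)) + (m+1) := by
  rw [Nat.card_congr (SsetEquiv m), Nat.card_sum]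
  simp

lemma Pm_neg_eq_bot {n : ℤ} (hn : n < 0) : Pm n = ⊥ := by
  rw [eq_bot_iff]
  intro p hp
  simp only [Submodule.mem_bot]
  by_contra hne
  obtain ⟨d, hd⟩ := exists_coeff_ne_zero hne
  have := hp hd
  rw [wdeg_eq] at this
  omega

lemma monomial_eq_smul_prod (d : Fin 3 →₀ ℕ) (r : ℝ) :
    (monomial d r : R3) = r • (X 0^(d 0) * X 1^(d 1) * X 2^(d 2) : R3) := by
  rw [monomial_eq, smul_eq_C_mul]
  congr 1
  rw [Finsupp.prod_fintype _ _ (fun i => pow_zero _)]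
  simp [Fin.prod_univ_three]

lemma Pm_le_map (k : ℕ) : Pm (k:ℤ) ≤ (Pm ((k:ℤ)+2)).map ΔH := by
  intro p hp
  rw [p.as_sum]
  apply Submodule.sum_mem
  intro d hd
  have hw : Finsupp.weight w3 d = (k:ℤ) := hp (mem_support_iff.1 hd)
  rw [wdeg_eq] at hw
  have hdeg : d 0 + d 1 + 2 * d 2 = k := by exact_mod_cast hw
  rw [monomial_eq_smul_prod]
  exact Submodule.smul_mem _ _ (mono_surj k (3 * d 2 + d 1) (d 0) (d 1) (d 2) le_rfl hdeg)

lemma ΔH_surj (m : ℕ) : ∀ q ∈ Pm ((m:ℤ) - 2), ∃ p ∈ Pm (m:ℤ), ΔH p = q := by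
  intro q hq
  rcases Nat.lt_or_ge m 2 with hm | hm
  · have : ((m:ℤ) - 2) < 0 := by omega
    rw [Pm_neg_eq_bot this, Submodule.mem_bot] at hq
    exact ⟨0, Submodule.zero_mem _, by rw [hq, map_zero]⟩
  · obtain ⟨k, rfl⟩ : ∃ k : ℕ, m = k + 2 := ⟨m - 2, by omega⟩
    have e : ((k + 2 : ℕ) : ℤ) - 2 = (k:ℤ) := by push_cast; ring
    rw [e] at hq
    obtain ⟨p, hp, hpq⟩ := Pm_le_map k hq
    exact ⟨p, by rwa [show ((k:ℤ)+2) = ((k+2:ℕ):ℤ) by push_cast; ring] at hp, hpq⟩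

/-- ΔH restricted to Pm m, valued in Pm (m-2). -/
def ΔHres (m : ℤ) : Pm m →ₗ[ℝ] Pm (m - 2) :=
  ΔH.restrict (fun p hp => ΔH_mem hp)

lemma ΔHres_surj (m : ℕ) : LinearMap.range (ΔHres (m:ℤ)) = ⊤ := by
  rw [LinearMap.range_eq_top]
  rintro ⟨q, hq⟩
  obtain ⟨p, hp, hpq⟩ := ΔH_surj m q hq
  exact ⟨⟨p, hp⟩, Subtype.ext hpq⟩

lemma ker_ΔHres (m : ℤ) :
    LinearMap.ker (ΔHres m) = (Hm m).comap (Pm m).subtype := by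
  ext ⟨p, hp⟩
  simp only [LinearMap.mem_ker, Submodule.mem_comap, Submodule.subtype_apply]
  constructor
  · intro h
    refine ⟨hp, ?_⟩
    have := congrArg Subtype.val h
    simp only [ΔHres, LinearMap.restrict_coe_apply] at this
    simpa [LinearMap.mem_ker] using this
  · intro h
    apply Subtype.ext
    simp only [ΔHres, LinearMap.restrict_coe_apply]
    simpa using h.2

set_option synthInstance.maxHeartbeats 1000000 in
set_option maxHeartbeats 2000000 in
lemma finrank_Hm (m : ℕ) : Module.finrank ℝ (Hm (m:ℤ)) = m + 1 := by
  have hle : Hm (m:ℤ) ≤ Pm (m:ℤ) := inf_le_left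
  have e1 : Module.finrank ℝ (Hm (m:ℤ)) =
      Module.finrank ℝ (LinearMap.ker (ΔHres (m:ℤ))) := by
    rw [ker_ΔHres]
    exact (Submodule.comapSubtypeEquivOfLe hle).finrank_eq.symm
  have e2 := LinearMap.finrank_range_add_finrank_ker (ΔHres (m:ℤ))
  rw [ΔHres_surj m, finrank_top] at e2
  have e3 : Module.finrank ℝ (Pm ((m:ℤ) - 2)) + (m + 1) = Module.finrank ℝ (Pm (m:ℤ)) := by
    rw [finrank_Pm, finrank_Pm, card_Sset m]
  omega

def scaleV (lam : ℝ) (v : Fin 3 → ℝ) : Fin 3 → ℝ := ![lam * v 0, lam * v 1, lam^2 * v 2]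

lemma eval_scale {p : R3} {m : ℕ} (hp : p ∈ Pm (m:ℤ)) (lam : ℝ) (v : Fin 3 → ℝ) :
    eval (scaleV lam v) p = lam^m * eval v p := by
  rw [p.as_sum, map_sum, map_sum, Finset.mul_sum]
  apply Finset.sum_congr rfl
  intro d hd
  have hw : Finsupp.weight w3 d = (m:ℤ) := hp (mem_support_iff.1 hd)
  rw [wdeg_eq] at hw
  have hdeg : d 0 + d 1 + 2 * d 2 = m := by exact_mod_cast hw
  rw [monomial_eq_smul_prod, smul_eval, smul_eval]
  simp only [map_mul, map_pow, eval_X]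
  have e0 : scaleV lam v 0 = lam * v 0 := rfl
  have e1 : scaleV lam v 1 = lam * v 1 := rfl
  have e2 : scaleV lam v 2 = lam^2 * v 2 := rfl
  rw [e0, e1, e2]
  have hm : lam ^ m = lam ^ (d 0) * lam ^ (d 1) * lam ^ (2 * d 2) := by
    rw [← pow_add, ← pow_add, ← hdeg]
  rw [hm, mul_pow, mul_pow, mul_pow, ← pow_mul]
  ring

lemma vanish_of_vanish_on_sphere (m : ℕ) (p : R3) (hp : p ∈ Pm (m:ℤ))
    (hvan : ∀ v ∈ Sρ, eval v p = 0) : p = 0 := by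
  have hpt : (![1,0,0] : Fin 3 → ℝ) ∈ Sρ := by
    simp [Sρ]
  apply MvPolynomial.funext
  intro v
  rw [map_zero]
  rcases Nat.eq_zero_or_pos m with hm | hm
  · -- p is constant
    have hpc : p = C (constantCoeff p) := by
      ext d
      rcases eq_or_ne d 0 with rfl | hd
      · simp [constantCoeff_eq]
      · rw [coeff_C, if_neg (Ne.symm hd)]
        by_contra hc
        have := hp hc
        rw [wdeg_eq, hm] at this
        have h0 : d 0 + d 1 + 2 * d 2 = 0 := by exact_mod_cast this
        apply hd
        ext i
        fin_cases i
        · exact show d 0 = 0 by omega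
        · exact show d 1 = 0 by omega
        · exact show d 2 = 0 by omega
    have := hvan _ hpt
    rw [hpc] at this ⊢
    simpa using this
  · set N := (v 0 ^ 2 + v 1 ^ 2) ^ 2 + v 2 ^ 2 with hN
    rcases eq_or_ne N 0 with h0 | h0
    · -- v = 0
      have hv2 : v 2 = 0 := by nlinarith [sq_nonneg (v 0 ^ 2 + v 1 ^ 2), sq_nonneg (v 2)]
      have hs2 : (v 0 ^ 2 + v 1 ^ 2) ^ 2 = 0 := by nlinarith [sq_nonneg (v 2)]
      have hsum : v 0 ^ 2 + v 1 ^ 2 = 0 := by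
        exact pow_eq_zero_iff (by norm_num) |>.1 hs2
      have hv0 : v 0 = 0 := by nlinarith [sq_nonneg (v 0), sq_nonneg (v 1)]
      have hv1 : v 1 = 0 := by nlinarith [sq_nonneg (v 0), sq_nonneg (v 1)]
      have hv : v = (0 : Fin 3 → ℝ) := by
        funext i; fin_cases i <;> assumption
      rw [hv, eval_zero]
      -- constant coefficient is zero since m > 0
      by_contra hc
      have := hp (show coeff 0 p ≠ 0 by simpa [constantCoeff_eq] using hc)
      rw [wdeg_eq] at this
      simp at this
      omega
    · have hNpos : 0 < N := by
        rcases lt_or_eq_of_le (by positivity : (0:ℝ) ≤ N) with h | h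
        · exact h
        · exact absurd h.symm h0
      set lam := N ^ (-(1/4) : ℝ) with hlam
      have hlampos : 0 < lam := Real.rpow_pos_of_pos hNpos _
      have hlam4 : lam ^ (4:ℕ) = N⁻¹ := by
        rw [hlam, ← Real.rpow_natCast (N ^ (-(1/4):ℝ)) 4, ← Real.rpow_mul (le_of_lt hNpos)]
        norm_num [Real.rpow_neg_one]
      have hu : scaleV lam v ∈ Sρ := by
        show (scaleV lam v 0 ^ 2 + scaleV lam v 1 ^ 2) ^ 2 + scaleV lam v 2 ^ 2 = 1
        have e0 : scaleV lam v 0 = lam * v 0 := rfl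
        have e1 : scaleV lam v 1 = lam * v 1 := rfl
        have e2 : scaleV lam v 2 = lam^2 * v 2 := rfl
        rw [e0, e1, e2]
        have : ((lam * v 0) ^ 2 + (lam * v 1) ^ 2) ^ 2 + (lam ^ 2 * v 2) ^ 2
            = lam ^ (4:ℕ) * N := by rw [hN]; ring
        rw [this, hlam4, inv_mul_cancel₀ h0]
      have := hvan _ hu
      rw [eval_scale hp lam v] at this
      have hlm : lam ^ m ≠ 0 := pow_ne_zero _ (ne_of_gt hlampos)
      exact (mul_eq_zero.1 this).resolve_left hlm

/-- a weighted homogeneous polynomial vanishing on the Korányi unit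
sphere is zero; hence the restriction map `H_m → (Sρ → ℝ)` is injective and its image
`H_m(S_ρ)` is finite-dimensional of dimension `m + 1`. -/
theorem stmt8 (m : ℕ) :
    (∀ p ∈ Pm (m : ℤ), (∀ v ∈ Sρ, eval v p = 0) → p = 0) ∧
    Function.Injective (resMap (m : ℤ)) ∧
    FiniteDimensional ℝ (LinearMap.range (resMap (m : ℤ))) ∧
    Module.finrank ℝ (LinearMap.range (resMap (m : ℤ))) = m + 1 := by
  have part1 : ∀ p ∈ Pm (m:ℤ), (∀ v ∈ Sρ, eval v p = 0) → p = 0 :=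
    fun p hp h => vanish_of_vanish_on_sphere m p hp h
  have hker : ∀ p : Hm (m:ℤ), resMap (m:ℤ) p = 0 → p = 0 := by
    intro p h
    have hp : (p : R3) ∈ Pm (m:ℤ) := p.2.1
    have hvan : ∀ v ∈ Sρ, eval v (p : R3) = 0 := by
      intro v hv
      have := congrFun h (⟨v, hv⟩ : Sρ)
      simpa [resMap] using this
    exact Subtype.ext (part1 _ hp hvan)
  have inj : Function.Injective (resMap (m:ℤ)) :=
    LinearMap.ker_eq_bot.1 (LinearMap.ker_eq_bot'.2 hker)
  have hle : Hm (m:ℤ) ≤ Pm (m:ℤ) := inf_le_left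
  have hfd : FiniteDimensional ℝ (Hm (m:ℤ)) :=
    Module.Finite.equiv (Submodule.comapSubtypeEquivOfLe hle)
  have e : Hm (m:ℤ) ≃ₗ[ℝ] LinearMap.range (resMap (m:ℤ)) :=
    LinearEquiv.ofInjective _ inj
  have hfd2 : FiniteDimensional ℝ (LinearMap.range (resMap (m:ℤ))) :=
    Module.Finite.equiv e
  refine ⟨part1, inj, hfd2, ?_⟩
  rw [← e.finrank_eq, finrank_Hm m]

end
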